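/- Let n and g be natural numbers with g ≥ 1, and let A, B ⊆ {0, 1, …, n−1} be finite sets. Let C be the (finite) set of consecutive occurrences (i, j) of (A, B) with distance j − i ≥ g. Then |C| · g ≤ n. In particular, there are at most n/g consecutive occurrences of distance at least g. -/
import Mathlib


/-- `(i, j)` is a consecutive occurrence of `(A, B)`: `i ∈ A`, `j ∈ B`, `i < j`,
and no `k ∈ A ∪ B` lies strictly between `i` and `j`. -/
def ConsecOcc (A B : Finset ℕ) (i j : ℕ) : Prop :=
  i ∈ A ∧ j ∈ B ∧ i < j ∧ ∀ k ∈ A ∪ B, ¬(i < k ∧ k < j)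

/-- If `A, B ⊆ {0, …, n−1}` and `C` is the set of consecutive occurrences `(i, j)` of
`(A, B)` with distance `j − i ≥ g` (where `g ≥ 1`), then `|C| · g ≤ n`; in particular
there are at most `n / g` consecutive occurrences of distance at least `g`. -/
theorem card_consecOcc_large_distance (n g : ℕ) (hg : 1 ≤ g) (A B : Finset ℕ)
    (hA : A ⊆ Finset.range n) (hB : B ⊆ Finset.range n)
    (C : Finset (ℕ × ℕ))
    (hC : ∀ p : ℕ × ℕ, p ∈ C ↔ ConsecOcc A B p.1 p.2 ∧ g ≤ p.2 - p.1) :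
    C.card * g ≤ n := by
  classical
  -- If two occurrences have different first coordinates, their intervals are far apart.
  have key : ∀ p ∈ C, ∀ q ∈ C, p.1 < q.1 → p.1 + g ≤ q.1 := by
    intro p hp q hq hlt
    obtain ⟨⟨hpA, hpB, hpij, hpcons⟩, hpg⟩ := (hC p).1 hp
    obtain ⟨⟨hqA, hqB, hqij, hqcons⟩, hqg⟩ := (hC q).1 hq
    have h1 : p.2 ≤ q.1 := by
      by_contra h
      push_neg at h
      exact hpcons q.1 (Finset.mem_union_left _ hqA) ⟨hlt, h⟩
    omega
  -- Equal first coordinates force equal occurrences.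
  have hsame : ∀ p ∈ C, ∀ q ∈ C, p.1 = q.1 → p = q := by
    intro p hp q hq h1
    obtain ⟨⟨hpA, hpB, hpij, hpcons⟩, _⟩ := (hC p).1 hp
    obtain ⟨⟨hqA, hqB, hqij, hqcons⟩, _⟩ := (hC q).1 hq
    have h2 : p.2 = q.2 := by
      by_contra hne
      rcases Nat.lt_or_ge p.2 q.2 with h | h
      · exact hqcons p.2 (Finset.mem_union_right _ hpB) ⟨h1 ▸ hpij, h⟩
      · have h3 : q.2 < p.2 := lt_of_le_of_ne h (Ne.symm hne)
        exact hpcons q.2 (Finset.mem_union_right _ hqB) ⟨h1 ▸ hqij, h3⟩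
    exact Prod.ext h1 h2
  -- The intervals are pairwise disjoint.
  have hdisj : (C : Set (ℕ × ℕ)).PairwiseDisjoint
      (fun p : ℕ × ℕ => Finset.Ico p.1 (p.1 + g)) := by
    intro p hp q hq hne
    have h1 : p.1 ≠ q.1 := fun h => hne (hsame p hp q hq h)
    simp only [Function.onFun]
    rw [Finset.disjoint_left]
    intro x hx hx'
    simp only [Finset.mem_Ico] at hx hx'
    rcases Nat.lt_or_ge p.1 q.1 with h | h
    · have := key p hp q hq h; omega
    · have h' : q.1 < p.1 := lt_of_le_of_ne h (Ne.symm h1)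
      have := key q hq p hp h'; omega
  -- Each interval lies in `range n`.
  have hsub : C.biUnion (fun p : ℕ × ℕ => Finset.Ico p.1 (p.1 + g)) ⊆ Finset.range n := by
    intro x hx
    obtain ⟨p, hp, hxp⟩ := Finset.mem_biUnion.1 hx
    obtain ⟨⟨hpA, hpB, hpij, _⟩, hpg⟩ := (hC p).1 hp
    have hj := Finset.mem_range.1 (hB hpB)
    simp only [Finset.mem_Ico] at hxp
    exact Finset.mem_range.2 (by omega)
  calc C.card * g = ∑ p ∈ C, (Finset.Ico p.1 (p.1 + g)).card := by
        simp [Nat.card_Ico, Finset.sum_const, mul_comm]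
    _ = (C.biUnion (fun p : ℕ × ℕ => Finset.Ico p.1 (p.1 + g))).card :=
        (Finset.card_biUnion (fun p hp q hq hne => hdisj hp hq hne)).symm
    _ ≤ (Finset.range n).card := Finset.card_le_card hsub
    _ = n := Finset.card_range n
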